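/- Let L₀ and L₁ be self-adjoint operators on a real Hilbert space, with L₀ ≥ 0 and ker L₀ = span{u} for some nonzero u. Suppose λ ∈ ℂ, λ ≠ 0, and R is a nonzero (complexified) vector with L₀ L₁ R = -λ² R. Then R ⊥ u, and if additionally R is in the domain where L₀⁻¹ is defined on {u}^⊥, the identity -λ² ⟨R, L₀⁻¹ R⟩ = ⟨R, L₁ R⟩ holds; since both inner products are real, λ² ∈ ℝ. -/

import Mathlib

noncomputable section

/-- Cauchy–Schwarz for the semi-inner-product induced by a nonnegative
symmetric operator. -/
lemma pos_op_cs {H : Type*} [NormedAddCommGroup H] [InnerProductSpace ℂ H]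
    (L0 : H →L[ℂ] H)
    (hsym : ∀ x y : H, (inner ℂ (L0 x) y : ℂ) = inner ℂ x (L0 y))
    (hpos : ∀ x : H, 0 ≤ (inner ℂ x (L0 x) : ℂ).re)
    (x y : H) :
    ‖(inner ℂ x (L0 y) : ℂ)‖ * ‖(inner ℂ y (L0 x) : ℂ)‖
      ≤ (inner ℂ x (L0 x) : ℂ).re * (inner ℂ y (L0 y) : ℂ).re := by
  let c : PreInnerProductSpace.Core ℂ H :=
    { inner := fun a b => (inner ℂ a (L0 b) : ℂ)
      conj_inner_symm := fun a b => by
        rw [← hsym b a]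
        exact inner_conj_symm _ _
      re_inner_nonneg := fun a => hpos a
      add_left := fun a b z => by simp [inner_add_left]
      smul_left := fun a b r => by simp [inner_smul_left, mul_comm] }
  exact @InnerProductSpace.Core.inner_mul_inner_self_le ℂ H _ _ _ c x y

/-- If `⟪S, L0 S⟫ = 0` for a nonnegative symmetric operator, then `L0 S = 0`. -/
lemma pos_op_null {H : Type*} [NormedAddCommGroup H] [InnerProductSpace ℂ H]
    [CompleteSpace H] (L0 : H →L[ℂ] H)
    (hsym : ∀ x y : H, (inner ℂ (L0 x) y : ℂ) = inner ℂ x (L0 y))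
    (hpos : ∀ x : H, 0 ≤ (inner ℂ x (L0 x) : ℂ).re)
    (S : H) (hS : (inner ℂ S (L0 S) : ℂ).re = 0) : L0 S = 0 := by
  have h : ∀ y : H, (inner ℂ y (L0 S) : ℂ) = 0 := by
    intro y
    have hcs := pos_op_cs L0 hsym hpos y S
    rw [hS, mul_zero] at hcs
    have hconj : (inner ℂ S (L0 y) : ℂ) = starRingEnd ℂ (inner ℂ y (L0 S) : ℂ) := by
      rw [← hsym y S, inner_conj_symm]
    rw [hconj, RCLike.norm_conj] at hcs
    have : ‖(inner ℂ y (L0 S) : ℂ)‖ = 0 := by nlinarith [norm_nonneg (inner ℂ y (L0 S) : ℂ)]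
    simpa using this
  have := h (L0 S)
  rwa [inner_self_eq_zero] at this

theorem eigenvalue_squared_real
    {H : Type*} [NormedAddCommGroup H] [InnerProductSpace ℂ H] [CompleteSpace H]
    (L0 L1 : H →L[ℂ] H)
    (h0sa : IsSelfAdjoint L0) (h1sa : IsSelfAdjoint L1)
    (h0pos : ∀ x : H, 0 ≤ (inner ℂ x (L0 x) : ℂ).re)
    (u : H) (hu : u ≠ 0)
    (hker : LinearMap.ker (L0 : H →ₗ[ℂ] H) = Submodule.span ℂ {u})
    (lam : ℂ) (hlam : lam ≠ 0) (R : H) (hR : R ≠ 0)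
    (heig : L0 (L1 R) = (-(lam ^ 2)) • R) :
    (inner ℂ u R : ℂ) = 0 ∧
      ∀ S : H, L0 S = R →
        ((-(lam ^ 2)) * (inner ℂ R S : ℂ) = (inner ℂ R (L1 R) : ℂ)
          ∧ (lam ^ 2).im = 0) := by
  have hsym0 : ∀ x y : H, (inner ℂ (L0 x) y : ℂ) = inner ℂ x (L0 y) :=
    h0sa.isSymmetric
  have hsym1 : ∀ x y : H, (inner ℂ (L1 x) y : ℂ) = inner ℂ x (L1 y) :=
    h1sa.isSymmetric
  have hlam2 : -(lam ^ 2) ≠ 0 := by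
    simp [pow_eq_zero_iff, hlam]
  have hLu : L0 u = 0 := by
    have : u ∈ LinearMap.ker (L0 : H →ₗ[ℂ] H) := by
      rw [hker]; exact Submodule.mem_span_singleton_self u
    exact this
  constructor
  · have key : (-(lam ^ 2)) * (inner ℂ u R : ℂ) = 0 := by
      calc (-(lam ^ 2)) * (inner ℂ u R : ℂ) = inner ℂ u ((-(lam ^ 2)) • R) := by
            rw [inner_smul_right]
        _ = inner ℂ u (L0 (L1 R)) := by rw [heig]
        _ = inner ℂ (L0 u) (L1 R) := (hsym0 u (L1 R)).symm
        _ = 0 := by rw [hLu, inner_zero_left]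
    exact (mul_eq_zero.mp key).resolve_left hlam2
  · intro S hS
    -- c := ⟪R, S⟫ is real and nonzero
    have hcconj : starRingEnd ℂ (inner ℂ R S : ℂ) = (inner ℂ R S : ℂ) := by
      rw [inner_conj_symm]
      calc (inner ℂ S R : ℂ) = inner ℂ S (L0 S) := by rw [hS]
        _ = inner ℂ (L0 S) S := (hsym0 S S).symm
        _ = inner ℂ R S := by rw [hS]
    have hcim : (inner ℂ R S : ℂ).im = 0 := by
      have := congrArg Complex.im hcconj
      simp only [Complex.conj_im] at this
      linarith
    have hcne : (inner ℂ R S : ℂ) ≠ 0 := by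
      intro h0
      have hre : (inner ℂ S (L0 S) : ℂ).re = 0 := by
        rw [hS]
        have : (inner ℂ S R : ℂ) = 0 := by
          rw [← inner_conj_symm, h0, map_zero]
        rw [this]; simp
      have := pos_op_null L0 hsym0 h0pos S hre
      rw [hS] at this
      exact hR this
    -- the main identity
    have heq : (-(lam ^ 2)) * (inner ℂ R S : ℂ) = (inner ℂ R (L1 R) : ℂ) := by
      calc (-(lam ^ 2)) * (inner ℂ R S : ℂ)
          = (-(lam ^ 2)) * (inner ℂ S R : ℂ) := by
            rw [← inner_conj_symm S R, hcconj]
        _ = inner ℂ S ((-(lam ^ 2)) • R) := by rw [inner_smul_right]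
        _ = inner ℂ S (L0 (L1 R)) := by rw [heig]
        _ = inner ℂ (L0 S) (L1 R) := (hsym0 S (L1 R)).symm
        _ = inner ℂ R (L1 R) := by rw [hS]
    refine ⟨heq, ?_⟩
    -- ⟪R, L1 R⟫ is real
    have hrim : (inner ℂ R (L1 R) : ℂ).im = 0 := by
      have : starRingEnd ℂ (inner ℂ R (L1 R) : ℂ) = (inner ℂ R (L1 R) : ℂ) := by
        rw [inner_conj_symm]; exact hsym1 R R
      have h2 := congrArg Complex.im this
      simp only [Complex.conj_im] at h2
      linarith
    have him : ((-(lam ^ 2)) * (inner ℂ R S : ℂ)).im = 0 := by rw [heq]; exact hrim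
    rw [Complex.mul_im, hcim, mul_zero, zero_add] at him
    have hcre : (inner ℂ R S : ℂ).re ≠ 0 := by
      intro h
      apply hcne
      exact Complex.ext h hcim
    have : (-(lam ^ 2)).im = 0 := by
      rcases mul_eq_zero.mp him with h | h
      · exact h
      · exact absurd h hcre
    simpa using this
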